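/- Let p be prime, and let A, B ∈ ℤ[a] be monic polynomials such that: A ≡ B^N (mod p) for some N ≥ 1; the reduction of B mod p is irreducible over 𝔽_p; and p^{2·deg(B)} does not divide resultant(A, B). Then A is irreducible over ℚ. -/

import Mathlib

open Polynomial

/-- The resultant of two integer polynomials `f` and `g`, defined (up to the usual
sign conventions) as the determinant of their Sylvester matrix: the first
`g.natDegree` rows carry the shifted coefficients of `f`, and the remaining
`f.natDegree` rows carry the shifted coefficients of `g`. -/
noncomputable def resultantZ (f g : Polynomial ℤ) : ℤ :=
  Matrix.det (Matrix.of fun i j : Fin (f.natDegree + g.natDegree) =>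
    if (i : ℕ) < g.natDegree then
      (if (i : ℕ) ≤ (j : ℕ) ∧ (j : ℕ) ≤ (i : ℕ) + f.natDegree
        then f.coeff (f.natDegree + i - j) else 0)
    else
      (if (i : ℕ) - g.natDegree ≤ (j : ℕ) ∧ (j : ℕ) ≤ (i : ℕ) - g.natDegree + g.natDegree
        then g.coeff (g.natDegree + ((i : ℕ) - g.natDegree) - j) else 0))

open Finset

lemma entry_aux (f : Polynomial ℤ) (d D i j : ℕ) (hf : f.natDegree ≤ d)
    (hiD : i + d < D) (hj : j < D) :
    (if i ≤ j ∧ j ≤ i + d then f.coeff (d + i - j) else 0)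
      = (f * X ^ (D - 1 - (d + i))).coeff (D - 1 - j) := by
  rw [Polynomial.coeff_mul_X_pow']
  split_ifs with h1 h2 h2
  · congr 1; omega
  · exact absurd (by omega) h2
  · symm
    apply Polynomial.coeff_eq_zero_of_natDegree_lt
    omega
  · rfl

lemma expand_aux (V : Polynomial ℤ) (n : ℕ) (hV : V.natDegree < n) :
    V = ∑ t ∈ Finset.range n, Polynomial.C (V.coeff (n - 1 - t)) * X ^ (n - 1 - t) := by
  conv_lhs => rw [Polynomial.as_sum_range' V n hV]
  rw [show (∑ t ∈ Finset.range n, Polynomial.C (V.coeff (n - 1 - t)) * X ^ (n - 1 - t))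
      = ∑ t ∈ Finset.range n, Polynomial.C (V.coeff t) * X ^ t from
    Finset.sum_range_reflect (fun t => Polynomial.C (V.coeff t) * X ^ t) n]
  exact Finset.sum_congr rfl fun t _ => (Polynomial.C_mul_X_pow_eq_monomial).symm

lemma sum_split_aux (m n : ℕ) (g : ℕ → ℤ) :
    ∑ s ∈ Finset.range (n + m), g s
      = (∑ s ∈ Finset.range m, g s) + ∑ t ∈ Finset.range n, g (m + t) := by
  rw [Nat.add_comm n m, Finset.sum_range_add]

lemma prod_split_aux (m n : ℕ) (g : ℕ → ℤ) :
    ∏ s ∈ Finset.range (n + m), g s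
      = (∏ s ∈ Finset.range m, g s) * ∏ t ∈ Finset.range n, g (m + t) := by
  rw [Nat.add_comm n m, Finset.prod_range_add]

noncomputable def QfD (q : ℤ) (W : Polynomial ℤ) (m n : ℕ) : ℕ → ℕ → ℤ := fun i s =>
  if i < m then
    (if s < m then (if s = i then q ^ 2 else 0)
     else (X ^ (m - 1 - i) * W).coeff (n - 1 - (s - m)))
  else (if s = i then 1 else 0)

noncomputable def KfD (B E : Polynomial ℤ) (m n : ℕ) : ℕ → ℕ → ℤ := fun s j =>
  if s < m then (E * X ^ (m - 1 - s)).coeff (n + m - 1 - j)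
  else (B * X ^ (n - 1 - (s - m))).coeff (n + m - 1 - j)

lemma key (q : ℤ) (A B W E : Polynomial ℤ) (hA : A.Monic) (hB : B.Monic)
    (hfac : A = B * W + Polynomial.C q ^ 2 * E)
    (hE : E.natDegree < A.natDegree) :
    q ^ (2 * B.natDegree) ∣ resultantZ A B := by
  rcases Nat.eq_zero_or_pos B.natDegree with hm0 | hm1
  · rw [hm0]; simp
  set n := A.natDegree with hn
  set m := B.natDegree with hm
  have hn1 : 1 ≤ n := lt_of_le_of_lt (Nat.zero_le _) hE
  have hBW : B * W = A - Polynomial.C q ^ 2 * E := by rw [hfac]; ring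
  have hCE : (Polynomial.C q ^ 2 * E).natDegree < n := by
    have h1 : (Polynomial.C q ^ 2 * E).natDegree ≤ E.natDegree := by
      refine le_trans natDegree_mul_le ?_
      simp
    exact lt_of_le_of_lt h1 hE
  have hdegBW : (B * W).natDegree = n := by
    rw [hBW]; exact natDegree_sub_eq_left_of_natDegree_lt hCE
  have hW0 : W ≠ 0 := by
    intro h; rw [h, mul_zero] at hdegBW; simp at hdegBW; omega
  have hdegW : W.natDegree = n - m ∧ m ≤ n := by
    have := Polynomial.natDegree_mul hB.ne_zero hW0
    rw [hdegBW] at this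
    omega
  set QM : Matrix (Fin (n + m)) (Fin (n + m)) ℤ :=
    Matrix.of fun i j : Fin (n + m) => QfD q W m n i j with hQM
  set KM : Matrix (Fin (n + m)) (Fin (n + m)) ℤ :=
    Matrix.of fun i j : Fin (n + m) => KfD B E m n i j with hKM
  have hmat : (Matrix.of fun i j : Fin (n + m) =>
      if (i : ℕ) < m then
        (if (i : ℕ) ≤ (j : ℕ) ∧ (j : ℕ) ≤ (i : ℕ) + n
          then A.coeff (n + i - j) else 0)
      else
        (if (i : ℕ) - m ≤ (j : ℕ) ∧ (j : ℕ) ≤ (i : ℕ) - m + m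
          then B.coeff (m + ((i : ℕ) - m) - j) else 0)) = QM * KM := by
    ext i j
    rw [Matrix.mul_apply]
    simp only [Matrix.of_apply, hQM, hKM]
    rw [show (∑ s : Fin (n + m), QfD q W m n i s * KfD B E m n s j)
        = ∑ s ∈ Finset.range (n + m), QfD q W m n i s * KfD B E m n s j from
      Fin.sum_univ_eq_sum_range (fun s => QfD q W m n i s * KfD B E m n s j) (n + m)]
    rw [sum_split_aux]
    by_cases hi : (i : ℕ) < m
    · rw [if_pos hi]
      rw [entry_aux A n (n + m) (i : ℕ) (j : ℕ) le_rfl (by omega) j.isLt]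
      set V : Polynomial ℤ := X ^ (m - 1 - (i : ℕ)) * W with hV
      have hVdeg : V.natDegree < n := by
        refine lt_of_le_of_lt natDegree_mul_le ?_
        rw [natDegree_X_pow, hdegW.1]
        omega
      have h1 : (∑ s ∈ Finset.range m, QfD q W m n i s * KfD B E m n s j)
          = q ^ 2 * (E * X ^ (m - 1 - (i : ℕ))).coeff (n + m - 1 - (j : ℕ)) := by
        rw [Finset.sum_congr rfl (fun s hs => show QfD q W m n i s * KfD B E m n s j
            = if s = (i : ℕ) then q ^ 2 * (E * X ^ (m - 1 - s)).coeff (n + m - 1 - (j : ℕ)) else 0 by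
          rw [Finset.mem_range] at hs
          simp only [QfD, KfD, if_pos hs, if_pos hi]
          split_ifs <;> ring)]
        rw [Finset.sum_ite_eq' (Finset.range m) (i : ℕ), if_pos (Finset.mem_range.mpr hi)]
      have h2 : (∑ t ∈ Finset.range n, QfD q W m n i (m + t) * KfD B E m n (m + t) j)
          = (B * V).coeff (n + m - 1 - (j : ℕ)) := by
        rw [Finset.sum_congr rfl (fun t ht => show QfD q W m n i (m + t) * KfD B E m n (m + t) j
            = V.coeff (n - 1 - t) * (B * X ^ (n - 1 - t)).coeff (n + m - 1 - (j : ℕ)) by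
          simp only [QfD, KfD, if_pos hi, if_neg (by omega : ¬ m + t < m),
            Nat.add_sub_cancel_left, hV])]
        calc (∑ t ∈ Finset.range n, V.coeff (n - 1 - t)
                * (B * X ^ (n - 1 - t)).coeff (n + m - 1 - (j : ℕ)))
            = ∑ t ∈ Finset.range n, (Polynomial.C (V.coeff (n - 1 - t))
                * (B * X ^ (n - 1 - t))).coeff (n + m - 1 - (j : ℕ)) := by
              refine Finset.sum_congr rfl fun t _ => ?_
              rw [Polynomial.coeff_C_mul]
          _ = (∑ t ∈ Finset.range n, Polynomial.C (V.coeff (n - 1 - t))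
                * (B * X ^ (n - 1 - t))).coeff (n + m - 1 - (j : ℕ)) :=
              (Polynomial.finset_sum_coeff _ _ _).symm
          _ = (B * (∑ t ∈ Finset.range n, Polynomial.C (V.coeff (n - 1 - t))
                * X ^ (n - 1 - t))).coeff (n + m - 1 - (j : ℕ)) := by
              rw [Finset.mul_sum]
              congr 1
              exact Finset.sum_congr rfl fun t _ => by ring
          _ = (B * V).coeff (n + m - 1 - (j : ℕ)) := by rw [← expand_aux V n hVdeg]
      rw [h1, h2]
      rw [show n + m - 1 - (n + (i : ℕ)) = m - 1 - (i : ℕ) by omega]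
      rw [← Polynomial.coeff_C_mul, ← Polynomial.coeff_add]
      congr 1
      rw [hfac, hV, map_pow]
      ring
    · rw [if_neg hi]
      push_neg at hi
      rw [entry_aux B m (n + m) ((i : ℕ) - m) (j : ℕ) le_rfl (by omega) j.isLt]
      have h1 : (∑ s ∈ Finset.range m, QfD q W m n i s * KfD B E m n s j) = 0 := by
        refine Finset.sum_eq_zero fun s hs => ?_
        rw [Finset.mem_range] at hs
        simp only [QfD, if_neg (by omega : ¬ (i : ℕ) < m), if_neg (by omega : ¬ s = (i : ℕ))]
        ring
      have h2 : (∑ t ∈ Finset.range n, QfD q W m n i (m + t) * KfD B E m n (m + t) j)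
          = (B * X ^ (n - 1 - ((i : ℕ) - m))).coeff (n + m - 1 - (j : ℕ)) := by
        rw [Finset.sum_congr rfl (fun t ht => show QfD q W m n i (m + t) * KfD B E m n (m + t) j
            = if t = (i : ℕ) - m
              then (B * X ^ (n - 1 - t)).coeff (n + m - 1 - (j : ℕ)) else 0 by
          simp only [QfD, KfD, if_neg (by omega : ¬ (i : ℕ) < m),
            if_neg (by omega : ¬ m + t < m), Nat.add_sub_cancel_left]
          by_cases htt : t = (i : ℕ) - m
          · rw [if_pos (by omega : m + t = (i : ℕ)), if_pos htt, one_mul]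
          · rw [if_neg (by omega : ¬ m + t = (i : ℕ)), if_neg htt, zero_mul])]
        rw [Finset.sum_ite_eq' (Finset.range n) ((i : ℕ) - m),
          if_pos (Finset.mem_range.mpr (by omega : (i : ℕ) - m < n))]
      rw [h1, h2, zero_add,
        show n + m - 1 - (m + ((i : ℕ) - m)) = n - 1 - ((i : ℕ) - m) from by omega]
  have hQdet : QM.det = q ^ (2 * m) := by
    have htri : QM.BlockTriangular id := by
      intro i j hij
      have hij' : (j : ℕ) < (i : ℕ) := hij
      simp only [hQM, Matrix.of_apply, QfD]
      by_cases hi : (i : ℕ) < m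
      · rw [if_pos hi, if_pos (by omega : (j : ℕ) < m), if_neg (by omega : ¬ (j : ℕ) = (i : ℕ))]
      · rw [if_neg hi, if_neg (by omega : ¬ (j : ℕ) = (i : ℕ))]
    rw [Matrix.det_of_upperTriangular htri]
    have hdiag : ∀ i : Fin (n + m), QM i i = if (i : ℕ) < m then q ^ 2 else 1 := by
      intro i
      by_cases hi : (i : ℕ) < m
      · simp [hQM, QfD, hi]
      · simp [hQM, QfD, hi]
    rw [Finset.prod_congr rfl (fun i _ => hdiag i)]
    rw [show (∏ i : Fin (n + m), if (i : ℕ) < m then q ^ 2 else 1)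
        = ∏ s ∈ Finset.range (n + m), (if s < m then q ^ 2 else 1) from
      Fin.prod_univ_eq_prod_range (fun s => if s < m then q ^ 2 else 1) (n + m)]
    rw [prod_split_aux]
    rw [Finset.prod_congr rfl (fun s hs => show (if s < m then q ^ 2 else 1) = q ^ 2 from
      if_pos (Finset.mem_range.mp hs))]
    rw [Finset.prod_congr rfl (fun t _ => show (if m + t < m then q ^ 2 else 1) = 1 from
      if_neg (by omega))]
    rw [Finset.prod_const, Finset.prod_const, Finset.card_range, one_pow, mul_one, ← pow_mul,
      Nat.mul_comm]
  have : resultantZ A B = QM.det * KM.det := by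
    rw [resultantZ, ← hn, ← hm, hmat, Matrix.det_mul]
  rw [this, hQdet]
  exact Dvd.intro _ rfl
lemma core (p : ℕ) (hp : p.Prime) (B F G : Polynomial ℤ)
    (hB : B.Monic) (hF : F.Monic) (hG : G.Monic) (hm1 : 1 ≤ B.natDegree)
    (hFd : B.map (Int.castRingHom (ZMod p)) ∣ F.map (Int.castRingHom (ZMod p)))
    (hGd : B.map (Int.castRingHom (ZMod p)) ∣ G.map (Int.castRingHom (ZMod p))) :
    ((p : ℤ)) ^ (2 * B.natDegree) ∣ resultantZ (F * G) B := by
  haveI : Fact p.Prime := ⟨hp⟩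
  set φ := Int.castRingHom (ZMod p) with hφ
  have hp0 : (p : ℤ) ≠ 0 := by exact_mod_cast hp.ne_zero
  have extract : ∀ P : Polynomial ℤ, P.Monic → (B.map φ ∣ P.map φ) →
      ∃ Cp : Polynomial ℤ, P %ₘ B = Polynomial.C (p : ℤ) * Cp ∧ Cp.natDegree < B.natDegree := by
    intro P hP hdvd
    have h0 : (P %ₘ B).map φ = 0 := by
      rw [Polynomial.map_modByMonic _ hB]
      exact (Polynomial.modByMonic_eq_zero_iff_dvd (hB.map φ)).mpr hdvd
    have hdv : Polynomial.C (p : ℤ) ∣ P %ₘ B := by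
      rw [Polynomial.C_dvd_iff_dvd_coeff]
      intro k
      have hk := congrArg (fun Q => Q.coeff k) h0
      simp only [Polynomial.coeff_map, Polynomial.coeff_zero] at hk
      exact (ZMod.intCast_zmod_eq_zero_iff_dvd _ _).mp hk
    obtain ⟨Cp, hCp⟩ := hdv
    refine ⟨Cp, hCp, ?_⟩
    rcases eq_or_ne Cp 0 with rfl | h
    · rw [Polynomial.natDegree_zero]; omega
    · have h1 : Polynomial.C (p : ℤ) * Cp ≠ 0 :=
        mul_ne_zero (by simpa using hp0) h
      have h2 := Polynomial.degree_modByMonic_lt P hB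
      rw [hCp] at h2
      have h3 := Polynomial.natDegree_lt_natDegree h1 h2
      rwa [Polynomial.natDegree_C_mul hp0] at h3
  obtain ⟨C₁, hC1, hC1d⟩ := extract F hF hFd
  obtain ⟨C₂, hC2, hC2d⟩ := extract G hG hGd
  have hFeq : F = B * (F /ₘ B) + Polynomial.C (p : ℤ) * C₁ := by
    conv_lhs => rw [← Polynomial.modByMonic_add_div F B]
    rw [hC1]; ring
  have hGeq : G = B * (G /ₘ B) + Polynomial.C (p : ℤ) * C₂ := by
    conv_lhs => rw [← Polynomial.modByMonic_add_div G B]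
    rw [hC2]; ring
  have hFm : B.natDegree ≤ F.natDegree := by
    have h := Polynomial.natDegree_le_of_dvd hFd ((hF.map φ).ne_zero)
    rwa [hB.natDegree_map, hF.natDegree_map] at h
  have hGm : B.natDegree ≤ G.natDegree := by
    have h := Polynomial.natDegree_le_of_dvd hGd ((hG.map φ).ne_zero)
    rwa [hB.natDegree_map, hG.natDegree_map] at h
  have hfac : F * G = B * ((F /ₘ B) * (B * (G /ₘ B))
        + Polynomial.C (p : ℤ) * ((F /ₘ B) * C₂ + C₁ * (G /ₘ B)))
      + Polynomial.C (p : ℤ) ^ 2 * (C₁ * C₂) := by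
    linear_combination G * hFeq + (B * (F /ₘ B) + Polynomial.C (p : ℤ) * C₁) * hGeq
  have hE : (C₁ * C₂).natDegree < (F * G).natDegree := by
    have h1 : (C₁ * C₂).natDegree ≤ C₁.natDegree + C₂.natDegree := Polynomial.natDegree_mul_le
    have h2 : (F * G).natDegree = F.natDegree + G.natDegree := hF.natDegree_mul hG
    omega
  exact key ((p : ℤ)) (F * G) B _ (C₁ * C₂) (hF.mul hG) hB hfac hE

theorem stmt_17 (p : ℕ) (hp : p.Prime) (A B : Polynomial ℤ)
    (hA : A.Monic) (hB : B.Monic)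
    (hred : ∃ N : ℕ, 1 ≤ N ∧
      A.map (Int.castRingHom (ZMod p)) = (B.map (Int.castRingHom (ZMod p))) ^ N)
    (hBirr : Irreducible (B.map (Int.castRingHom (ZMod p))))
    (hres : ¬ ((p : ℤ) ^ (2 * B.natDegree) ∣ resultantZ A B)) :
    Irreducible (A.map (Int.castRingHom ℚ)) := by
  haveI : Fact p.Prime := ⟨hp⟩
  set φ := Int.castRingHom (ZMod p) with hφ
  obtain ⟨N, hN1, hAB⟩ := hred
  have hm1 : 1 ≤ B.natDegree := by
    by_contra h
    push_neg at h
    have h0 : B = 1 := hB.natDegree_eq_zero.mp (by omega)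
    rw [h0, Polynomial.map_one] at hBirr
    exact hBirr.not_isUnit isUnit_one
  have hn : A.natDegree = N * B.natDegree := by
    have h1 : (A.map φ).natDegree = A.natDegree := hA.natDegree_map φ
    have h2 : ((B.map φ) ^ N).natDegree = N * B.natDegree := by
      rw [Polynomial.natDegree_pow, hB.natDegree_map]
    rw [← h1, hAB, h2]
  have hn1 : 1 ≤ A.natDegree := by
    rw [hn]
    simpa using Nat.mul_le_mul hN1 hm1
  rw [← Polynomial.IsPrimitive.Int.irreducible_iff_irreducible_map_cast hA.isPrimitive]
  constructor
  · intro hu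
    have := Polynomial.natDegree_eq_zero_of_isUnit hu
    omega
  · intro F G hFG
    by_contra hcon
    push_neg at hcon
    obtain ⟨hFu, hGu⟩ := hcon
    have hlc : F.leadingCoeff * G.leadingCoeff = 1 := by
      rw [← Polynomial.leadingCoeff_mul, ← hFG]; exact hA
    have main : ∀ F' G' : Polynomial ℤ, F'.Monic → G'.Monic → A = F' * G' →
        IsUnit F' ∨ IsUnit G' := by
      intro F' G' hF' hG' hA'
      by_contra hc
      push_neg at hc
      have hF1 : 1 ≤ F'.natDegree := by
        rcases Nat.eq_zero_or_pos F'.natDegree with h | h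
        · exact absurd (hF'.natDegree_eq_zero.mp h ▸ isUnit_one) hc.1
        · exact h
      have hG1 : 1 ≤ G'.natDegree := by
        rcases Nat.eq_zero_or_pos G'.natDegree with h | h
        · exact absurd (hG'.natDegree_eq_zero.mp h ▸ isUnit_one) hc.2
        · exact h
      have hmul : (F'.map φ) * (G'.map φ) = (B.map φ) ^ N := by
        rw [← Polynomial.map_mul, ← hA', hAB]
      have hdvd : ∀ P : Polynomial ℤ, P.Monic → 1 ≤ P.natDegree →
          (P.map φ ∣ (B.map φ) ^ N) → B.map φ ∣ P.map φ := by
        intro P hP h1 hPd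
        have hPnu : ¬ IsUnit (P.map φ) := by
          intro hu
          have := Polynomial.natDegree_eq_zero_of_isUnit hu
          rw [hP.natDegree_map] at this
          omega
        obtain ⟨r, hrirr, hrd⟩ :=
          WfDvdMonoid.exists_irreducible_factor hPnu (hP.map φ).ne_zero
        have hrp : Prime r := UniqueFactorizationMonoid.irreducible_iff_prime.mp hrirr
        have hrB : r ∣ B.map φ := hrp.dvd_of_dvd_pow (hrd.trans hPd)
        exact ((hrirr.associated_of_dvd hBirr hrB).symm.dvd).trans hrd
      have hdvdF : B.map φ ∣ F'.map φ :=
        hdvd F' hF' hF1 ⟨G'.map φ, hmul.symm⟩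
      have hdvdG : B.map φ ∣ G'.map φ :=
        hdvd G' hG' hG1 ⟨F'.map φ, by rw [← hmul]; ring⟩
      have h2m := core p hp B F' G' hB hF' hG' hm1 hdvdF hdvdG
      rw [← hA'] at h2m
      exact hres h2m
    rcases Int.mul_eq_one_iff_eq_one_or_neg_one.mp hlc with ⟨h1, h2⟩ | ⟨h1, h2⟩
    · rcases main F G h1 h2 hFG with h | h
      · exact hFu h
      · exact hGu h
    · have hFm : (-F).Monic := by
        rw [Polynomial.Monic.def, Polynomial.leadingCoeff_neg, h1, neg_neg]
      have hGm : (-G).Monic := by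
        rw [Polynomial.Monic.def, Polynomial.leadingCoeff_neg, h2, neg_neg]
      rcases main (-F) (-G) hFm hGm (by rw [neg_mul_neg]; exact hFG) with h | h
      · exact hFu (by simpa using h.neg)
      · exact hGu (by simpa using h.neg)
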